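/- Let τ be a unital completely positive map on a finite-dimensional C*-algebra (or type-I factor) A with faithful invariant state φ₀. Then (A, τ, φ₀) is strongly mixing if and only if (i) it is ergodic (the fixed-point set of τ is ℂ·1) and (ii) the peripheral point spectrum of τ is trivial: {w ∈ S¹ : ∃ x ≠ 0, τ(x) = wx} = {1}. -/

import Mathlib

open ComplexOrder Filter

set_option linter.unusedSectionVars false

namespace MixingAux8

open Complex


variable {A : Type*} [NormedRing A] [StarRing A] [CStarRing A]
    [NormedAlgebra ℂ A] [StarModule ℂ A] [CompleteSpace A]
    [PartialOrder A] [StarOrderedRing A] [FiniteDimensional ℂ A]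

lemma phi_mono (φ₀ : A →ₗ[ℂ] ℂ) (hφpos : ∀ x : A, 0 ≤ x → 0 ≤ φ₀ x)
    {a b : A} (h : a ≤ b) : φ₀ a ≤ φ₀ b := by
  have h1 := hφpos (b - a) (sub_nonneg.2 h)
  rw [map_sub] at h1
  exact sub_nonneg.mp h1

lemma r_pos (φ₀ : A →ₗ[ℂ] ℂ) (hφpos : ∀ x : A, 0 ≤ x → 0 ≤ φ₀ x)
    (hfaithful : ∀ x : A, 0 ≤ x → φ₀ x = 0 → x = 0) {x : A} (hx : x ≠ 0) :
    0 < (φ₀ (star x * x)).re := by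
  have h0 : 0 ≤ φ₀ (star x * x) := hφpos _ (star_mul_self_nonneg x)
  obtain ⟨hre, him⟩ := Complex.le_def.mp h0
  simp only [Complex.zero_re, Complex.zero_im] at hre him
  rcases lt_or_eq_of_le hre with h | h
  · exact h
  · exfalso
    have hz : φ₀ (star x * x) = 0 := by
      apply Complex.ext <;> simp [← h, ← him]
    have h2 := hfaithful _ (star_mul_self_nonneg x) hz
    exact hx ((CStarRing.star_mul_self_eq_zero_iff x).mp h2)

lemma contract (τ : A →ₗ[ℂ] A)
    (hτKS : ∀ x : A, star (τ x) * τ x ≤ τ (star x * x))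
    (φ₀ : A →ₗ[ℂ] ℂ) (hφpos : ∀ x : A, 0 ≤ x → 0 ≤ φ₀ x)
    (hinv : ∀ x : A, φ₀ (τ x) = φ₀ x) (x : A) :
    (φ₀ (star (τ x) * τ x)).re ≤ (φ₀ (star x * x)).re := by
  have h := phi_mono φ₀ hφpos (hτKS x)
  rw [hinv] at h
  exact (Complex.le_def.mp h).1

lemma contract_iter (τ : A →ₗ[ℂ] A)
    (hτKS : ∀ x : A, star (τ x) * τ x ≤ τ (star x * x))
    (φ₀ : A →ₗ[ℂ] ℂ) (hφpos : ∀ x : A, 0 ≤ x → 0 ≤ φ₀ x)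
    (hinv : ∀ x : A, φ₀ (τ x) = φ₀ x) (x : A) (n : ℕ) :
    (φ₀ (star (τ^[n] x) * τ^[n] x)).re ≤ (φ₀ (star x * x)).re := by
  induction n with
  | zero => simp
  | succ n ih =>
    rw [Function.iterate_succ_apply']
    exact (contract τ hτKS φ₀ hφpos hinv _).trans ih

lemma expand_sq (φ₀ : A →ₗ[ℂ] ℂ) (c d : ℂ) (u v : A) :
    φ₀ (star (c • u + d • v) * (c • u + d • v))
      = (starRingEnd ℂ c * c) * φ₀ (star u * u) + (starRingEnd ℂ c * d) * φ₀ (star u * v)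
        + (starRingEnd ℂ d * c) * φ₀ (star v * u) + (starRingEnd ℂ d * d) * φ₀ (star v * v) := by
  simp only [star_add, star_smul, add_mul, mul_add, smul_mul_smul_comm, map_add, map_smul,
    smul_eq_mul, Complex.star_def]
  ring

lemma eig_norm_le_one (τ : A →ₗ[ℂ] A)
    (hτKS : ∀ x : A, star (τ x) * τ x ≤ τ (star x * x))
    (φ₀ : A →ₗ[ℂ] ℂ) (hφpos : ∀ x : A, 0 ≤ x → 0 ≤ φ₀ x)
    (hfaithful : ∀ x : A, 0 ≤ x → φ₀ x = 0 → x = 0)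
    (hinv : ∀ x : A, φ₀ (τ x) = φ₀ x)
    {μ : ℂ} {v : A} (hv : v ≠ 0) (h : τ v = μ • v) : ‖μ‖ ≤ 1 := by
  have hc := contract τ hτKS φ₀ hφpos hinv v
  rw [h] at hc
  have hcalc : φ₀ (star (μ • v) * (μ • v)) = ((‖μ‖^2 : ℝ) : ℂ) * φ₀ (star v * v) := by
    rw [star_smul, smul_mul_smul_comm, map_smul, smul_eq_mul, Complex.star_def,
      ← Complex.normSq_eq_conj_mul_self, Complex.normSq_eq_norm_sq]
  rw [hcalc, Complex.re_ofReal_mul] at hc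
  have hr := r_pos φ₀ hφpos hfaithful hv
  by_contra hgt
  push_neg at hgt
  have h2 : 1 < ‖μ‖^2 := by nlinarith
  nlinarith


lemma jordan (τ : A →ₗ[ℂ] A)
    (hτKS : ∀ x : A, star (τ x) * τ x ≤ τ (star x * x))
    (φ₀ : A →ₗ[ℂ] ℂ) (hφpos : ∀ x : A, 0 ≤ x → 0 ≤ φ₀ x)
    (hfaithful : ∀ x : A, 0 ≤ x → φ₀ x = 0 → x = 0)
    (hinv : ∀ x : A, φ₀ (τ x) = φ₀ x)
    {μ : ℂ} (hμ : ‖μ‖ = 1) {x y : A}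
    (hx : τ x = μ • x) (hy : τ y = μ • y + x) : x = 0 := by
  by_contra hx0
  have hformula : ∀ n : ℕ, τ^[n+1] y = (μ^(n+1)) • y + (((n+1 : ℕ) : ℂ) * μ^n) • x := by
    intro n
    induction n with
    | zero => simpa using hy
    | succ n ih =>
      rw [Function.iterate_succ_apply', ih, map_add, map_smul, map_smul, hy, hx]
      rw [smul_add, smul_smul, smul_smul]
      push_cast
      match_scalars <;> ring
  have hR := r_pos φ₀ hφpos hfaithful hx0
  set R : ℝ := (φ₀ (star x * x)).re with hRdef
  set C : ℝ := ‖φ₀ (star y * x)‖ + ‖φ₀ (star x * y)‖ with hCdef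
  have key : ∀ n : ℕ, ((n:ℝ)+1)^2 * R ≤ ((n:ℝ)+1) * C := by
    intro n
    have h := contract_iter τ hτKS φ₀ hφpos hinv y (n+1)
    rw [hformula n, expand_sq] at h
    set s : ℂ := μ^(n+1) with hsdef
    set c : ℂ := ((n+1 : ℕ) : ℂ) * μ^n with hcdef
    have hns : ‖s‖ = 1 := by rw [hsdef, norm_pow, hμ, one_pow]
    have hnc : ‖c‖ = (n:ℝ)+1 := by
      rw [hcdef, norm_mul, norm_pow, hμ, one_pow, mul_one, Complex.norm_natCast]
      push_cast; ring
    have hss : starRingEnd ℂ s * s = 1 := by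
      rw [← Complex.normSq_eq_conj_mul_self, Complex.normSq_eq_norm_sq,
        hns]
      norm_num
    have hcc : starRingEnd ℂ c * c = ((((n:ℝ)+1)^2 : ℝ) : ℂ) := by
      rw [← Complex.normSq_eq_conj_mul_self, Complex.normSq_eq_norm_sq,
        hnc]
    rw [hss, hcc, one_mul] at h
    have hre1 : -(((n:ℝ)+1) * ‖φ₀ (star y * x)‖) ≤ (starRingEnd ℂ s * c * φ₀ (star y * x)).re := by
      have h1 : |(starRingEnd ℂ s * c * φ₀ (star y * x)).re| ≤ ‖starRingEnd ℂ s * c * φ₀ (star y * x)‖ := by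
        exact Complex.abs_re_le_norm _
      have h2 : ‖starRingEnd ℂ s * c * φ₀ (star y * x)‖ = ((n:ℝ)+1) * ‖φ₀ (star y * x)‖ := by
        rw [norm_mul, norm_mul, RCLike.norm_conj, hns, hnc, one_mul]
      rw [h2] at h1
      linarith [neg_abs_le ((starRingEnd ℂ s * c * φ₀ (star y * x)).re)]
    have hre2 : -(((n:ℝ)+1) * ‖φ₀ (star x * y)‖) ≤ (starRingEnd ℂ c * s * φ₀ (star x * y)).re := by
      have h1 : |(starRingEnd ℂ c * s * φ₀ (star x * y)).re| ≤ ‖starRingEnd ℂ c * s * φ₀ (star x * y)‖ := by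
        exact Complex.abs_re_le_norm _
      have h2 : ‖starRingEnd ℂ c * s * φ₀ (star x * y)‖ = ((n:ℝ)+1) * ‖φ₀ (star x * y)‖ := by
        rw [norm_mul, norm_mul, RCLike.norm_conj, hns, hnc, mul_one]
      rw [h2] at h1
      linarith [neg_abs_le ((starRingEnd ℂ c * s * φ₀ (star x * y)).re)]
    simp only [Complex.add_re, Complex.re_ofReal_mul] at h
    rw [hCdef]
    nlinarith [hre1, hre2, h]
  obtain ⟨n, hn⟩ := exists_nat_gt (C / R)
  have h1 := key n
  have h2 : C < n * R := (div_lt_iff₀ hR).mp hn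
  nlinarith [hR, h2, h1, Nat.cast_nonneg (α := ℝ) n]

lemma stab (τ : A →ₗ[ℂ] A)
    (hτKS : ∀ x : A, star (τ x) * τ x ≤ τ (star x * x))
    (φ₀ : A →ₗ[ℂ] ℂ) (hφpos : ∀ x : A, 0 ≤ x → 0 ≤ φ₀ x)
    (hfaithful : ∀ x : A, 0 ≤ x → φ₀ x = 0 → x = 0)
    (hinv : ∀ x : A, φ₀ (τ x) = φ₀ x)
    {μ : ℂ} (hμ : ‖μ‖ = 1) :
    ∀ (k : ℕ) (x : A), ((τ - μ • 1)^k) x = 0 → τ x = μ • x := by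
  intro k
  induction k with
  | zero =>
    intro x hx
    simp only [pow_zero, Module.End.one_apply] at hx
    simp [hx]
  | succ k ih =>
    intro x hx
    rw [pow_succ, Module.End.mul_apply] at hx
    have hu := ih _ hx
    simp only [LinearMap.sub_apply, LinearMap.smul_apply, Module.End.one_apply] at hu ⊢
    have hzero : τ x - μ • x = 0 := by
      apply jordan τ hτKS φ₀ hφpos hfaithful hinv hμ (x := τ x - μ • x) (y := x)
      · exact hu
      · abel
    rw [sub_eq_zero] at hzero
    exact hzero

lemma exists_eig (τ : A →ₗ[ℂ] A) {μ : ℂ} :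
    ∀ (k : ℕ) (x : A), ((τ - μ • 1)^k) x = 0 → x ≠ 0 → ∃ v : A, v ≠ 0 ∧ τ v = μ • v := by
  intro k
  induction k with
  | zero =>
    intro x hx hx0
    simp only [pow_zero, Module.End.one_apply] at hx
    exact absurd hx hx0
  | succ k ih =>
    intro x hx hx0
    rw [pow_succ, Module.End.mul_apply] at hx
    by_cases hy : (τ - μ • 1) x = 0
    · refine ⟨x, hx0, ?_⟩
      simp only [LinearMap.sub_apply, LinearMap.smul_apply, Module.End.one_apply,
        sub_eq_zero] at hy
      exact hy
    · exact ih _ hx hy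

lemma choose_mul_geom_tendsto (j : ℕ) {r : ℝ} (h0 : 0 ≤ r) (h1 : r < 1) :
    Tendsto (fun n : ℕ => (n.choose j : ℝ) * r ^ (n - j)) atTop (nhds 0) := by
  rw [← tendsto_add_atTop_iff_nat j]
  simp only [Nat.add_sub_cancel]
  have hsum : Tendsto (fun n : ℕ => (n:ℝ)^j * r^n) atTop (nhds 0) :=
    (summable_pow_mul_geometric_of_norm_lt_one (R := ℝ) j
      (by rwa [Real.norm_eq_abs, _root_.abs_of_nonneg h0])).tendsto_atTop_zero
  have h2 : Tendsto (fun n : ℕ => (2:ℝ)^j * ((n:ℝ)^j * r^n)) atTop (nhds 0) := by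
    simpa using hsum.const_mul ((2:ℝ)^j)
  apply squeeze_zero' (Eventually.of_forall fun n => by positivity) _ h2
  filter_upwards [eventually_ge_atTop j] with n hn
  have hb : (((n+j).choose j : ℕ) : ℝ) ≤ (((n+j)^j : ℕ) : ℝ) := by
    exact_mod_cast Nat.choose_le_pow (n+j) j
  calc (((n+j).choose j : ℕ) : ℝ) * r^n ≤ (((n+j) : ℕ):ℝ)^j * r^n := by
        push_cast at hb ⊢
        exact mul_le_mul_of_nonneg_right hb (pow_nonneg h0 n)
    _ ≤ ((2*n : ℕ):ℝ)^j * r^n := by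
        have : ((n+j : ℕ):ℝ) ≤ ((2*n : ℕ):ℝ) := by exact_mod_cast (by omega : n + j ≤ 2*n)
        exact mul_le_mul_of_nonneg_right (pow_le_pow_left₀ (by positivity) this j)
          (pow_nonneg h0 n)
    _ = (2:ℝ)^j * ((n:ℝ)^j * r^n) := by push_cast; ring

lemma term_tendsto (j : ℕ) {μ : ℂ} (hμ : ‖μ‖ < 1) (v : A) :
    Tendsto (fun n : ℕ => ((n.choose j : ℂ) * μ ^ (n-j)) • v) atTop (nhds 0) := by
  have h : Tendsto (fun n : ℕ => (n.choose j : ℂ) * μ ^ (n-j)) atTop (nhds 0) := by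
    rw [tendsto_zero_iff_norm_tendsto_zero]
    have h2 := choose_mul_geom_tendsto j (norm_nonneg μ) hμ
    convert h2 using 2 with n
    rw [norm_mul, norm_pow, Complex.norm_natCast]
  simpa using h.smul_const v

end MixingAux8

open MixingAux8 in
/-- for a unital completely positive (Kadison–Schwarz) map `τ` on a
finite-dimensional C*-algebra with faithful invariant state `φ₀`:
strong mixing ⟺ ergodicity together with trivial peripheral point spectrum. -/
theorem mixing_iff_ergodic_and_trivial_peripheral_spectrum
    {A : Type*} [NormedRing A] [StarRing A] [CStarRing A]
    [NormedAlgebra ℂ A] [StarModule ℂ A] [CompleteSpace A]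
    [PartialOrder A] [StarOrderedRing A] [FiniteDimensional ℂ A]
    (τ : A →ₗ[ℂ] A) (hτ1 : τ 1 = 1)
    (hτpos : ∀ x : A, 0 ≤ x → 0 ≤ τ x)
    (hτKS : ∀ x : A, star (τ x) * τ x ≤ τ (star x * x))
    (φ₀ : A →ₗ[ℂ] ℂ) (hφpos : ∀ x : A, 0 ≤ x → 0 ≤ φ₀ x) (hφ1 : φ₀ 1 = 1)
    (hfaithful : ∀ x : A, 0 ≤ x → φ₀ x = 0 → x = 0)
    (hinv : ∀ x : A, φ₀ (τ x) = φ₀ x) :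
    -- strong mixing
    (∀ x : A, Tendsto (fun n : ℕ => τ^[n] x) atTop (nhds (φ₀ x • 1)))
      ↔
    -- ergodicity and trivial peripheral point spectrum
    ((∀ x : A, τ x = x → ∃ c : ℂ, x = c • 1) ∧
      (∀ w : ℂ, ‖w‖ = 1 → (∃ x : A, x ≠ 0 ∧ τ x = w • x) → w = 1)) := by
  constructor
  · intro hmix
    constructor
    · intro x hx
      have hfix : ∀ n, τ^[n] x = x := by
        intro n
        induction n with
        | zero => rfl
        | succ n ih => rw [Function.iterate_succ_apply', ih, hx]
      have h1 := hmix x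
      rw [show (fun n : ℕ => τ^[n] x) = fun _ => x from funext hfix] at h1
      exact ⟨φ₀ x, tendsto_nhds_unique tendsto_const_nhds h1⟩
    · rintro w hw ⟨x, hx0, hwx⟩
      by_contra hw1
      have hφx : φ₀ x = 0 := by
        have h1 : φ₀ (τ x) = φ₀ x := hinv x
        rw [hwx, map_smul, smul_eq_mul] at h1
        have h2 : (w - 1) * φ₀ x = 0 := by ring_nf; linear_combination h1
        rcases mul_eq_zero.mp h2 with h | h
        · exact absurd (by linear_combination h) hw1
        · exact h
      have hit : ∀ n, τ^[n] x = w^n • x := by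
        intro n
        induction n with
        | zero => simp
        | succ n ih =>
          rw [Function.iterate_succ_apply', ih, map_smul, hwx, smul_smul, pow_succ]
      have h1 := hmix x
      rw [hφx, zero_smul] at h1
      rw [show (fun n : ℕ => τ^[n] x) = fun n => w^n • x from funext hit] at h1
      have hnorm := h1.norm
      simp only [norm_smul, norm_pow, hw, one_pow, one_mul, norm_zero] at hnorm
      exact hx0 (norm_eq_zero.mp (tendsto_nhds_unique tendsto_const_nhds hnorm))
  · rintro ⟨herg, hper⟩
    let S : Submodule ℂ A :=
      { carrier := {x : A | Tendsto (fun n : ℕ => τ^[n] x) atTop (nhds (φ₀ x • 1))}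
        add_mem' := by
          intro a b ha hb
          simp only [Set.mem_setOf_eq] at *
          have h := ha.add hb
          convert h using 1
          · funext n
            simp only [← Module.End.pow_apply, map_add]
          · rw [map_add, add_smul]
        zero_mem' := by
          simp only [Set.mem_setOf_eq]
          have : (fun n : ℕ => τ^[n] (0:A)) = fun _ => (0:A) := by
            funext n; simp only [← Module.End.pow_apply, map_zero]
          rw [this, map_zero, zero_smul]
          exact tendsto_const_nhds
        smul_mem' := by
          intro c a ha
          simp only [Set.mem_setOf_eq] at *
          have h := ha.const_smul c
          convert h using 1
          · funext n
            simp only [← Module.End.pow_apply, map_smul]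
          · rw [map_smul, smul_eq_mul, mul_smul, ← smul_assoc, smul_eq_mul] }
    intro x
    have hsup := Module.End.iSup_maxGenEigenspace_eq_top (f := (τ : Module.End ℂ A))
    have hle : ∀ μ : ℂ, Module.End.maxGenEigenspace (τ : Module.End ℂ A) μ ≤ S := by
      intro μ z hz
      rw [Module.End.mem_maxGenEigenspace] at hz
      obtain ⟨k, hk⟩ := hz
      by_cases hz0 : z = 0
      · rw [hz0]; exact S.zero_mem
      rcases lt_trichotomy ‖μ‖ 1 with hlt | hμ1 | hgt
      · -- ‖μ‖ < 1
        have hNz : ∀ n : ℕ, k ≤ n → τ^[n] z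
            = ∑ j ∈ Finset.range k, ((n.choose j : ℂ) * μ ^ (n-j)) • (((τ - μ • 1)^j) z) := by
          intro n hn
          have hcomm : Commute (τ - μ • (1 : A →ₗ[ℂ] A)) (μ • 1) := by
            simp only [Commute, SemiconjBy, mul_smul_comm, smul_mul_assoc, mul_one, one_mul]
          have hτeq : τ = (τ - μ • 1) + μ • (1 : A →ₗ[ℂ] A) := by abel
          rw [← Module.End.pow_apply]
          conv_lhs => rw [hτeq]
          rw [hcomm.add_pow, LinearMap.sum_apply]
          rw [← Finset.sum_subset (Finset.range_subset_range.2 (by omega) :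
              Finset.range k ⊆ Finset.range (n+1))]
          · apply Finset.sum_congr rfl
            intro j hj
            simp only [Module.End.mul_apply, Module.End.natCast_apply, smul_pow, one_pow,
              LinearMap.smul_apply, Module.End.one_apply, map_smul, map_nsmul]
            rw [← Nat.cast_smul_eq_nsmul ℂ, smul_smul]
          · intro j hjmem hjk
            rw [Finset.mem_range, not_lt] at hjk
            have hjz : ((τ - μ • 1)^j) z = 0 := by
              have hde : j - k + k = j := Nat.sub_add_cancel hjk
              rw [← hde, pow_add, Module.End.mul_apply, hk, map_zero]
            simp only [Module.End.mul_apply, Module.End.natCast_apply, smul_pow, one_pow,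
              LinearMap.smul_apply, Module.End.one_apply, map_smul, map_nsmul, hjz]
            simp
        have hlim0 : Tendsto (fun n : ℕ => τ^[n] z) atTop (nhds 0) := by
          have hsumlim : Tendsto (fun n : ℕ => ∑ j ∈ Finset.range k,
              ((n.choose j : ℂ) * μ ^ (n-j)) • (((τ - μ • 1)^j) z)) atTop (nhds 0) := by
            have h := tendsto_finset_sum (Finset.range k)
              (fun j _ => term_tendsto j hlt (((τ - μ • 1)^j) z))
            simpa using h
          apply hsumlim.congr'
          filter_upwards [eventually_ge_atTop k] with n hn
          exact (hNz n hn).symm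
        have hφz : φ₀ z = 0 := by
          have hcont : Continuous φ₀ := LinearMap.continuous_of_finiteDimensional φ₀
          have hconst : ∀ n : ℕ, φ₀ (τ^[n] z) = φ₀ z := by
            intro n
            induction n with
            | zero => rfl
            | succ n ih => rw [Function.iterate_succ_apply', hinv]; exact ih
          have h1 : Tendsto (fun n : ℕ => φ₀ (τ^[n] z)) atTop (nhds (φ₀ 0)) :=
            (hcont.tendsto 0).comp hlim0
          rw [map_zero] at h1
          have h2 : Tendsto (fun _ : ℕ => φ₀ z) atTop (nhds 0) := by
            apply h1.congr
            intro n; exact hconst n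
          exact tendsto_nhds_unique tendsto_const_nhds h2
        show Tendsto (fun n : ℕ => τ^[n] z) atTop (nhds (φ₀ z • 1))
        rw [hφz, zero_smul]
        exact hlim0
      · -- ‖μ‖ = 1
        have heig : τ z = μ • z := stab τ hτKS φ₀ hφpos hfaithful hinv hμ1 k z hk
        by_cases hone : μ = 1
        · subst hone
          rw [one_smul] at heig
          have hfix : ∀ n, τ^[n] z = z := by
            intro n
            induction n with
            | zero => rfl
            | succ n ih => rw [Function.iterate_succ_apply', ih, heig]
          obtain ⟨c, hc⟩ := herg z heig
          have hφz : φ₀ z • (1:A) = z := by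
            rw [hc, map_smul, smul_eq_mul, hφ1, mul_one]
          show Tendsto (fun n : ℕ => τ^[n] z) atTop (nhds (φ₀ z • 1))
          rw [hφz, show (fun n : ℕ => τ^[n] z) = fun _ => z from funext hfix]
          exact tendsto_const_nhds
        · exact absurd (hper μ hμ1 ⟨z, hz0, heig⟩) hone
      · -- ‖μ‖ > 1
        obtain ⟨v, hv0, hv⟩ := exists_eig τ k z hk hz0
        exact absurd (eig_norm_le_one τ hτKS φ₀ hφpos hfaithful hinv hv0 hv)
          (not_le.2 hgt)
    have hx : x ∈ (⨆ μ : ℂ, Module.End.maxGenEigenspace (τ : Module.End ℂ A) μ) := by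
      rw [hsup]; exact Submodule.mem_top
    exact (iSup_le hle) hx
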